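/- Let A be a complex Banach algebra with a character φ. Suppose there is a net (m_i)_{i∈I} in A, indexed by a directed set I, with ‖m_i‖ ≤ 1 and φ(m_i) = 1 for all i, and ‖a m_i − φ(a) m_i‖ → 0 for every a ∈ A. Let X and Y be Banach right A-modules, where the action of A on Y is given by y·a = φ(a) y. For u ∈ X* and a ∈ A define a·u ∈ X* by (a·u)(x) = u(x·a), and similarly on Y*. Let T : X* → Y* be a bounded linear map which is continuous with respect to the weak* topologies of X* and Y*, is a left A-module morphism (T(a·u) = a·T(u) for all a ∈ A, u ∈ X*), and admits a bounded linear right inverse F : Y* → X*. Then there exists a bounded linear right inverse Θ : Y* → X* of T which is a left A-module morphism, i.e. Θ(v)(x·a) = φ(a)·Θ(v)(x) for all a ∈ A, v ∈ Y*, x ∈ X. -/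

import Mathlib

open Filter

/-- Let `A` be a complex Banach algebra with a character `φ` admitting a net `(m_i)` with
`‖m_i‖ ≤ 1`, `φ(m_i) = 1` and `‖a m_i − φ(a) m_i‖ → 0` for all `a ∈ A`.  Let `X` be a
Banach right `A`-module (with action `σ`, where `σ a x` denotes `x·a`) and `Y` a Banach
space with the right `A`-action `y·a = φ(a) y`.  If `T : X* → Y*` is a bounded linear map,
continuous for the weak* topologies, a left `A`-module morphism, and admitting a bounded
linear right inverse, then `T` admits a bounded linear right inverse `Θ` which is a left
`A`-module morphism, i.e. `Θ(v)(x·a) = φ(a)·Θ(v)(x)`. -/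
theorem exists_module_morphism_right_inverse (A : Type*) [NonUnitalNormedRing A]
    [NormedSpace ℂ A] [IsScalarTower ℂ A A] [SMulCommClass ℂ A A] [CompleteSpace A]
    (φ : A →L[ℂ] ℂ) (hφmul : ∀ a b : A, φ (a * b) = φ a * φ b) (hφne : φ ≠ 0)
    (I : Type*) [Nonempty I] [Preorder I] [IsDirected I (· ≤ ·)]
    (m : I → A) (hm_bdd : ∀ i, ‖m i‖ ≤ 1) (hm_one : ∀ i, φ (m i) = 1)
    (hm : ∀ a : A, Tendsto (fun i => ‖a * m i - φ a • m i‖) atTop (nhds 0))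
    (X : Type*) [NormedAddCommGroup X] [NormedSpace ℂ X] [CompleteSpace X]
    (σ : A →L[ℂ] X →L[ℂ] X) (hσ_act : ∀ a b : A, σ (a * b) = (σ b).comp (σ a))
    (hσ_norm : ∀ (a : A) (x : X), ‖σ a x‖ ≤ ‖x‖ * ‖a‖)
    (Y : Type*) [NormedAddCommGroup Y] [NormedSpace ℂ Y] [CompleteSpace Y]
    (T : (X →L[ℂ] ℂ) →L[ℂ] (Y →L[ℂ] ℂ))
    (hT_wk : Continuous (fun u : WeakDual ℂ X => (T u : WeakDual ℂ Y)))
    (hT_mod : ∀ (a : A) (u : X →L[ℂ] ℂ), T (u.comp (σ a)) = φ a • T u)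
    (F : (Y →L[ℂ] ℂ) →L[ℂ] (X →L[ℂ] ℂ))
    (hF : T.comp F = ContinuousLinearMap.id ℂ (Y →L[ℂ] ℂ)) :
    ∃ Θ : (Y →L[ℂ] ℂ) →L[ℂ] (X →L[ℂ] ℂ),
      T.comp Θ = ContinuousLinearMap.id ℂ (Y →L[ℂ] ℂ) ∧
      ∀ (a : A) (v : Y →L[ℂ] ℂ) (x : X), Θ v (σ a x) = φ a * Θ v x := by
  classical
  have hne : (atTop : Filter I).NeBot :=
    Filter.atTop_neBot_iff.mpr ⟨‹Nonempty I›, ‹IsDirected I (· ≤ ·)›⟩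
  let U : Ultrafilter I := @Ultrafilter.of I atTop hne
  have hU : (U : Filter I) ≤ (atTop : Filter I) := Ultrafilter.of_le _
  -- the approximating net of operators
  set u : (Y →L[ℂ] ℂ) → I → (X →L[ℂ] ℂ) := fun v i => (F v).comp (σ (m i)) with hu
  have hbound : ∀ (v : Y →L[ℂ] ℂ) (x : X) (i : I), ‖u v i x‖ ≤ ‖F‖ * ‖v‖ * ‖x‖ := by
    intro v x i
    calc ‖(F v) (σ (m i) x)‖ ≤ ‖F v‖ * ‖σ (m i) x‖ := (F v).le_opNorm _
      _ ≤ (‖F‖ * ‖v‖) * (‖x‖ * ‖m i‖) :=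
          mul_le_mul (F.le_opNorm v) (hσ_norm _ _) (norm_nonneg _) (by positivity)
      _ ≤ (‖F‖ * ‖v‖) * (‖x‖ * 1) :=
          mul_le_mul_of_nonneg_left
            (mul_le_mul_of_nonneg_left (hm_bdd i) (norm_nonneg x)) (by positivity)
      _ = ‖F‖ * ‖v‖ * ‖x‖ := by ring
  have hconv : ∀ (v : Y →L[ℂ] ℂ) (x : X),
      ∃ c : ℂ, Tendsto (fun i => u v i x) (U : Filter I) (nhds c) := by
    intro v x
    obtain ⟨c, -, hc⟩ := (isCompact_closedBall (0 : ℂ) (‖F‖ * ‖v‖ * ‖x‖)).ultrafilter_le_nhds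
      (U.map fun i => u v i x)
      (by
        rw [Ultrafilter.coe_map, le_principal_iff, mem_map]
        filter_upwards with i
        simpa [Metric.mem_closedBall, dist_eq_norm] using hbound v x i)
    exact ⟨c, hc⟩
  set g : (Y →L[ℂ] ℂ) → X → ℂ := fun v x => limUnder (U : Filter I) (fun i => u v i x) with hg
  have htend : ∀ (v : Y →L[ℂ] ℂ) (x : X),
      Tendsto (fun i => u v i x) (U : Filter I) (nhds (g v x)) := fun v x =>
    tendsto_nhds_limUnder (hconv v x)
  have hgadd : ∀ v x y, g v (x + y) = g v x + g v y := by
    intro v x y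
    refine tendsto_nhds_unique (htend v (x + y)) ?_
    have := (htend v x).add (htend v y)
    simpa [map_add] using this
  have hgsmul : ∀ v (c : ℂ) x, g v (c • x) = c • g v x := by
    intro v c x
    refine tendsto_nhds_unique (htend v (c • x)) ?_
    have := (htend v x).const_smul c
    simpa [map_smul] using this
  have hgnorm : ∀ v x, ‖g v x‖ ≤ ‖F‖ * ‖v‖ * ‖x‖ := by
    intro v x
    exact le_of_tendsto (htend v x).norm (Filter.Eventually.of_forall fun i => hbound v x i)
  -- build Θ v as a continuous linear functional
  let Θfun : (Y →L[ℂ] ℂ) → (X →L[ℂ] ℂ) := fun v =>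
    LinearMap.mkContinuous
      { toFun := g v
        map_add' := hgadd v
        map_smul' := hgsmul v } (‖F‖ * ‖v‖)
      (fun x => by simpa [mul_assoc] using hgnorm v x)
  have hΘfun_apply : ∀ v x, Θfun v x = g v x := fun v x => rfl
  have hΘadd : ∀ v w, Θfun (v + w) = Θfun v + Θfun w := by
    intro v w
    ext x
    have h1 := (htend v x).add (htend w x)
    have h2 : Tendsto (fun i => u (v + w) i x) (U : Filter I) (nhds (g v x + g w x)) := by
      simpa [hu, map_add, ContinuousLinearMap.add_comp, ContinuousLinearMap.add_apply] using h1
    have := tendsto_nhds_unique (htend (v + w) x) h2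
    simpa [hΘfun_apply] using this
  have hΘsmul : ∀ (c : ℂ) v, Θfun (c • v) = c • Θfun v := by
    intro c v
    ext x
    have h1 := (htend v x).const_smul c
    have h2 : Tendsto (fun i => u (c • v) i x) (U : Filter I) (nhds (c • g v x)) := by
      simpa [hu, map_smul, ContinuousLinearMap.smul_comp, ContinuousLinearMap.smul_apply] using h1
    have := tendsto_nhds_unique (htend (c • v) x) h2
    simpa [hΘfun_apply] using this
  let Θ : (Y →L[ℂ] ℂ) →L[ℂ] (X →L[ℂ] ℂ) :=
    LinearMap.mkContinuous
      { toFun := Θfun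
        map_add' := hΘadd
        map_smul' := hΘsmul } ‖F‖
      (fun v =>
        LinearMap.mkContinuous_norm_le _ (mul_nonneg (norm_nonneg F) (norm_nonneg v))
          (fun x => by simpa [mul_assoc] using hgnorm v x))
  have hΘ_apply : ∀ v x, Θ v x = g v x := fun v x => rfl
  refine ⟨Θ, ?_, ?_⟩
  · -- right inverse
    ext v y
    let ev : (X →L[ℂ] ℂ) → WeakDual ℂ X := fun w => w
    let evY : (Y →L[ℂ] ℂ) → WeakDual ℂ Y := fun w => w
    have hweak : Tendsto (fun i => ev (u v i)) (U : Filter I) (nhds (ev (Θ v))) := by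
      rw [tendsto_iff_forall_eval_tendsto_topDualPairing]
      intro x
      exact htend v x
    have hconst : ∀ i, T (u v i) = v := by
      intro i
      have h1 : T (u v i) = φ (m i) • T (F v) := hT_mod (m i) (F v)
      have h2 : T (F v) = v := by
        have := congrArg (fun S => S v) hF
        simpa using this
      rw [h1, h2, hm_one, one_smul]
    have hTweak := (hT_wk.tendsto (ev (Θ v))).comp hweak
    have he : ((fun w : WeakDual ℂ X => (T w : WeakDual ℂ Y)) ∘ fun i => ev (u v i))
        = fun _ : I => evY v := funext fun i => hconst i
    rw [he] at hTweak
    have heq : T (Θ v) = v := tendsto_nhds_unique hTweak tendsto_const_nhds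
    simp [heq]
  · -- module morphism
    intro a v x
    have h1 : Tendsto (fun i => u v i (σ a x)) (U : Filter I) (nhds (g v (σ a x))) :=
      htend v (σ a x)
    have h2 : Tendsto (fun i => φ a * u v i x) (U : Filter I) (nhds (φ a * g v x)) :=
      (htend v x).const_mul (φ a)
    have hdiff : Tendsto (fun i => u v i (σ a x) - φ a * u v i x) (U : Filter I) (nhds 0) := by
      have heqq : ∀ i, u v i (σ a x) - φ a * u v i x = F v (σ (a * m i - φ a • m i) x) := by
        intro i
        have e1 : u v i (σ a x) = F v (σ (a * m i) x) := by
          show F v (σ (m i) (σ a x)) = F v (σ (a * m i) x)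
          rw [hσ_act]; rfl
        have e2 : φ a * u v i x = F v (σ (φ a • m i) x) := by
          show φ a * F v (σ (m i) x) = F v (σ (φ a • m i) x)
          rw [map_smul σ]
          simp [smul_eq_mul]
        rw [e1, e2, ← map_sub (F v)]
        congr 1
        rw [map_sub σ]
        rfl
      have hb : ∀ i, ‖u v i (σ a x) - φ a * u v i x‖ ≤ ‖F v‖ * ‖x‖ * ‖a * m i - φ a • m i‖ := by
        intro i
        rw [heqq i]
        calc ‖F v (σ (a * m i - φ a • m i) x)‖ ≤ ‖F v‖ * ‖σ (a * m i - φ a • m i) x‖ :=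
              (F v).le_opNorm _
          _ ≤ ‖F v‖ * (‖x‖ * ‖a * m i - φ a • m i‖) := by
              gcongr
              exact hσ_norm _ _
          _ = ‖F v‖ * ‖x‖ * ‖a * m i - φ a • m i‖ := by ring
      have hzero : Tendsto (fun i => ‖F v‖ * ‖x‖ * ‖a * m i - φ a • m i‖) (U : Filter I)
          (nhds 0) := by
        have := ((hm a).const_mul (‖F v‖ * ‖x‖)).mono_left hU
        simpa using this
      exact squeeze_zero_norm hb hzero
    have h3 : Tendsto (fun i => u v i (σ a x)) (U : Filter I) (nhds (φ a * g v x + 0)) := by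
      have := h2.add hdiff
      simpa using this
    have := tendsto_nhds_unique h1 h3
    rw [hΘ_apply, hΘ_apply, this, add_zero]
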